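/- Let G be a complete q-tree DAG with q^i leaves (i ≥ 0, q ≥ 2). Then the pebbling number of G satisfies p(G) ≥ (q−1)·i, i.e., p(G) ≥ (q−1)·log_q(q^i). -/

import Mathlib

universe u

variable {V : Type u}

/-- One move of the (one-color) pebble game: place a pebble on a vertex all of whose
immediate predecessors carry pebbles, or remove a pebble. -/
def PebbleStep [DecidableEq V] (E : V → V → Prop) (s t : Finset V) : Prop :=
  (∃ v, v ∉ s ∧ (∀ u, E u v → u ∈ s) ∧ t = insert v s) ∨ (∃ v ∈ s, t = s.erase v)

/-- A complete pebbling schedule, given by its list of configurations, starting from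
no pebbles, in which every vertex is pebbled at least once. -/
def IsPebbling [DecidableEq V] (E : V → V → Prop) (φ : List (Finset V)) : Prop :=
  φ.head? = some (∅ : Finset V) ∧ List.Chain' (PebbleStep E) φ ∧ ∀ v : V, ∃ s ∈ φ, v ∈ s

/-- Maximum number of pebbles simultaneously on the DAG. -/
def maxPebbles [DecidableEq V] (φ : List (Finset V)) : ℕ :=
  (φ.map Finset.card).foldr max 0

/-- The pebbling number of a DAG. -/
noncomputable def pebblingNumber [DecidableEq V] (E : V → V → Prop) : ℕ :=
  sInf {m | ∃ φ : List (Finset V), IsPebbling E φ ∧ maxPebbles φ ≤ m}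

/-- Vertices of the complete `q`-tree with `q ^ i` leaves: depth `d` has `q ^ d` vertices. -/
abbrev TreeV (q i : ℕ) : Type := Σ d : Fin (i + 1), Fin (q ^ (d : ℕ))

/-- Edges of the complete `q`-tree, directed toward the root (depth `0`):
the vertex at depth `d+1` with index `j` points to the vertex at depth `d` with index `j / q`. -/
def TreeE (q i : ℕ) (u v : TreeV q i) : Prop :=
  (u.1 : ℕ) = (v.1 : ℕ) + 1 ∧ (u.2 : ℕ) / q = (v.2 : ℕ)

/-! ### Auxiliary development -/

section Sched

variable [DecidableEq V]

/-- Naive schedule: insert the vertices of `L` one by one, starting from `s`. -/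
def sched (L : List V) (s : Finset V) : List (Finset V) :=
  match L with
  | [] => [s]
  | v :: L' => s :: sched L' (insert v s)

lemma sched_head (L : List V) (s : Finset V) : (sched L s).head? = some s := by
  cases L <;> rfl

lemma sched_mem_self (L : List V) (s : Finset V) : s ∈ sched L s := by
  cases L <;> simp [sched]

lemma sched_mem (L : List V) (s : Finset V) {v : V} (hv : v ∈ L) :
    ∃ t ∈ sched L s, v ∈ t := by
  induction L generalizing s with
  | nil => simp at hv
  | cons w L' ih =>
    rcases List.mem_cons.1 hv with rfl | h
    · exact ⟨insert v s, List.mem_cons_of_mem _ (sched_mem_self _ _),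
        Finset.mem_insert_self _ _⟩
    · obtain ⟨t, ht, hvt⟩ := ih (insert w s) h
      exact ⟨t, List.mem_cons_of_mem _ ht, hvt⟩

lemma sched_chain (E : V → V → Prop) (hirr : ∀ v, ¬ E v v) (L : List V) (s : Finset V)
    (hnd : L.Nodup)
    (hnot : ∀ v ∈ L, v ∉ s) (hall : ∀ v ∈ L, ∀ u, E u v → u ∈ s ∨ u ∈ L)
    (hpair : List.Pairwise (fun a b => ¬ E b a) L) :
    List.Chain' (PebbleStep E) (sched L s) := by
  induction L generalizing s with
  | nil => exact List.isChain_singleton _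
  | cons w L' ih =>
    rw [sched]
    refine List.isChain_cons.2 ⟨?_, ?_⟩
    · intro y hy
      rw [sched_head, Option.mem_def, Option.some_inj] at hy
      subst hy
      left
      refine ⟨w, hnot w (by simp), ?_, rfl⟩
      intro u hu
      rcases hall w (by simp) u hu with h | h
      · exact h
      · rcases List.mem_cons.1 h with rfl | h
        · exact absurd hu (hirr _)
        · exact absurd hu ((List.pairwise_cons.1 hpair).1 u h)
    · refine ih (insert w s) hnd.of_cons ?_ ?_ (List.pairwise_cons.1 hpair).2
      · intro v hv
        simp only [Finset.mem_insert, not_or]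
        exact ⟨fun h => (List.nodup_cons.1 hnd).1 (h ▸ hv), hnot v (List.mem_cons_of_mem _ hv)⟩
      · intro v hv u hu
        rcases hall v (List.mem_cons_of_mem _ hv) u hu with h | h
        · exact Or.inl (Finset.mem_insert_of_mem h)
        · rcases List.mem_cons.1 h with rfl | h
          · exact Or.inl (Finset.mem_insert_self _ _)
          · exact Or.inr h

end Sched

/-- The list of all vertices, by decreasing depth. -/
def treeList (q i : ℕ) : List (TreeV q i) :=
  (List.finRange (i + 1)).reverse.flatMap
    (fun (d : Fin (i + 1)) => (List.finRange (q ^ (d : ℕ))).map (fun j => (⟨d, j⟩ : TreeV q i)))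

lemma mem_treeList (q i : ℕ) (v : TreeV q i) : v ∈ treeList q i := by
  obtain ⟨d, j⟩ := v
  simp only [treeList, List.mem_flatMap, List.mem_reverse, List.mem_finRange, List.mem_map]
  exact ⟨d, by simp, j, by simp, rfl⟩

lemma pairwise_treeList (q i : ℕ) :
    List.Pairwise (fun a b : TreeV q i => (b.1 : ℕ) ≤ (a.1 : ℕ)) (treeList q i) := by
  rw [treeList, List.pairwise_flatMap]
  constructor
  · intro d _
    rw [List.pairwise_map]
    exact (List.pairwise_lt_finRange _).imp (fun _ => le_rfl)
  · rw [List.pairwise_reverse]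
    refine (List.pairwise_lt_finRange _).imp ?_
    intro a b hab x hx y hy
    simp only [List.mem_map] at hx hy
    obtain ⟨jx, _, rfl⟩ := hx
    obtain ⟨jy, _, rfl⟩ := hy
    exact le_of_lt hab

lemma nodup_treeList (q i : ℕ) : (treeList q i).Nodup := by
  rw [treeList, List.nodup_flatMap]
  constructor
  · intro d _
    refine (List.nodup_finRange _).map ?_
    intro a b h
    simpa using h
  · rw [List.pairwise_reverse]
    refine (List.pairwise_lt_finRange _).imp ?_
    intro a b hab x hx hx'
    simp only [Function.onFun, List.mem_map] at hx hx'
    obtain ⟨ja, _, rfl⟩ := hx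
    obtain ⟨jb, _, h⟩ := hx'
    have h1 : (a : Fin (i+1)) = b := congrArg Sigma.fst h
    have : (a : ℕ) = (b : ℕ) := congrArg Fin.val h1
    omega

lemma exists_pebbling (q i : ℕ) :
    ∃ φ : List (Finset (TreeV q i)), IsPebbling (TreeE q i) φ := by
  refine ⟨sched (treeList q i) ∅, sched_head _ _, ?_, ?_⟩
  · refine sched_chain _ ?_ _ _ (nodup_treeList q i) (by simp) ?_ ?_
    · intro v hv
      exact absurd hv.1 (by omega)
    · intro v _ u _
      exact Or.inr (mem_treeList q i u)
    · refine (pairwise_treeList q i).imp ?_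
      intro a b hab h
      have := h.1
      omega
  · intro v
    exact sched_mem _ _ (mem_treeList q i v)

/-! ### Lower bound -/

/-- The subtree rooted at `v`. -/
def sub (q i : ℕ) (v : TreeV q i) : Finset (TreeV q i) :=
  Finset.univ.filter
    (fun u => (v.1 : ℕ) ≤ (u.1 : ℕ) ∧ (u.2 : ℕ) / q ^ ((u.1 : ℕ) - (v.1 : ℕ)) = (v.2 : ℕ))

lemma mem_sub {q i : ℕ} {v u : TreeV q i} :
    u ∈ sub q i v ↔ (v.1 : ℕ) ≤ (u.1 : ℕ) ∧
      (u.2 : ℕ) / q ^ ((u.1 : ℕ) - (v.1 : ℕ)) = (v.2 : ℕ) := by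
  simp [sub]

lemma self_mem_sub {q i : ℕ} (v : TreeV q i) : v ∈ sub q i v := by
  rw [mem_sub]
  simp

/-- The `j`-th child of a vertex `v` at depth `< i`. -/
def child {q i : ℕ} (hq : 1 ≤ q) (v : TreeV q i) (hd : (v.1 : ℕ) < i) (j : Fin q) :
    TreeV q i :=
  ⟨⟨(v.1 : ℕ) + 1, by omega⟩,
   ⟨(v.2 : ℕ) * q + (j : ℕ), by
      have h1 : (v.2 : ℕ) < q ^ (v.1 : ℕ) := v.2.isLt
      have h2 : (j : ℕ) < q := j.isLt
      have : (v.2 : ℕ) * q + q ≤ q ^ (v.1 : ℕ) * q := by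
        have := Nat.succ_le_of_lt h1
        calc (v.2 : ℕ) * q + q = ((v.2 : ℕ) + 1) * q := by ring
        _ ≤ q ^ (v.1 : ℕ) * q := Nat.mul_le_mul_right _ this
      have : (v.2 : ℕ) * q + (j : ℕ) < q ^ (v.1 : ℕ) * q := by omega
      simpa [pow_succ] using this⟩⟩

lemma child_edge {q i : ℕ} (hq : 1 ≤ q) (v : TreeV q i) (hd : (v.1 : ℕ) < i) (j : Fin q) :
    TreeE q i (child hq v hd j) v := by
  refine ⟨rfl, ?_⟩
  show ((v.2 : ℕ) * q + (j : ℕ)) / q = (v.2 : ℕ)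
  rw [mul_comm, Nat.mul_add_div (by omega), Nat.div_eq_of_lt j.isLt, add_zero]

lemma child_mem_sub {q i : ℕ} (hq : 1 ≤ q) (v : TreeV q i) (hd : (v.1 : ℕ) < i) (j : Fin q) :
    child hq v hd j ∈ sub q i v := by
  rw [mem_sub]
  constructor
  · show (v.1 : ℕ) ≤ (v.1 : ℕ) + 1; omega
  · show ((v.2 : ℕ) * q + (j : ℕ)) / q ^ ((v.1 : ℕ) + 1 - (v.1 : ℕ)) = (v.2 : ℕ)
    have : (v.1 : ℕ) + 1 - (v.1 : ℕ) = 1 := by omega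
    rw [this, pow_one, mul_comm, Nat.mul_add_div (by omega), Nat.div_eq_of_lt j.isLt, add_zero]

lemma sub_child_subset {q i : ℕ} (hq : 1 ≤ q) (v : TreeV q i) (hd : (v.1 : ℕ) < i) (j : Fin q) :
    sub q i (child hq v hd j) ⊆ sub q i v := by
  intro u hu
  rw [mem_sub] at hu ⊢
  obtain ⟨h1, h2⟩ := hu
  have h1' : (v.1 : ℕ) + 1 ≤ (u.1 : ℕ) := h1
  refine ⟨by omega, ?_⟩
  have hk : (u.1 : ℕ) - (v.1 : ℕ) = ((u.1 : ℕ) - ((v.1 : ℕ) + 1)) + 1 := by omega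
  rw [hk, pow_succ, ← Nat.div_div_eq_div_mul]
  have h2' : (u.2 : ℕ) / q ^ ((u.1 : ℕ) - ((v.1 : ℕ) + 1)) = (v.2 : ℕ) * q + (j : ℕ) := h2
  rw [h2', mul_comm, Nat.mul_add_div (by omega), Nat.div_eq_of_lt j.isLt, add_zero]

lemma sub_child_index {q i : ℕ} (hq : 1 ≤ q) (v : TreeV q i) (hd : (v.1 : ℕ) < i)
    {j j' : Fin q} {u : TreeV q i} (h : u ∈ sub q i (child hq v hd j))
    (h' : u ∈ sub q i (child hq v hd j')) : j = j' := by
  rw [mem_sub] at h h'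
  have e1 : (u.2 : ℕ) / q ^ ((u.1 : ℕ) - ((v.1 : ℕ) + 1)) = (v.2 : ℕ) * q + (j : ℕ) := h.2
  have e2 : (u.2 : ℕ) / q ^ ((u.1 : ℕ) - ((v.1 : ℕ) + 1)) = (v.2 : ℕ) * q + (j' : ℕ) := h'.2
  have : (j : ℕ) = (j' : ℕ) := by omega
  exact Fin.ext this

lemma getD_le_maxPebbles [DecidableEq V] (φ : List (Finset V)) {r : ℕ} (hr : r < φ.length) :
    (φ.getD r ∅).card ≤ maxPebbles φ := by
  have hmem : (φ.getD r ∅).card ∈ φ.map Finset.card := by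
    rw [List.getD_eq_getElem _ _ hr]
    exact List.mem_map_of_mem (List.getElem_mem hr)
  unfold maxPebbles
  generalize φ.map Finset.card = l at hmem ⊢
  induction l with
  | nil => simp at hmem
  | cons a l ih =>
    rcases List.mem_cons.1 hmem with rfl | h
    · exact le_max_of_le_left le_rfl
    · exact le_max_of_le_right (ih h)

lemma step_insert [DecidableEq V] {E : V → V → Prop} {s t : Finset V} (h : PebbleStep E s t)
    {w : V} (hw : w ∉ s) (hw' : w ∈ t) : ∀ u, E u w → u ∈ s := by
  rcases h with ⟨v, hv, hpred, rfl⟩ | ⟨v, hv, rfl⟩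
  · rcases Finset.mem_insert.1 hw' with rfl | h
    · exact hpred
    · exact absurd h hw
  · exact absurd (Finset.mem_of_mem_erase hw') hw

/-- Key inductive lemma: if the subtree of `v` (of height `h`) is empty at time `s` and `v`
carries a pebble at time `t > s`, then at some intermediate time the subtree holds at least
`(q-1)*h + 1` pebbles. -/
lemma key (q i : ℕ) (hq : 2 ≤ q) (φ : List (Finset (TreeV q i)))
    (hch : List.Chain' (PebbleStep (TreeE q i)) φ) :
    ∀ h : ℕ, ∀ v : TreeV q i, i - (v.1 : ℕ) = h → ∀ s t : ℕ, s < t → t < φ.length →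
      (φ.getD s ∅) ∩ sub q i v = ∅ → v ∈ φ.getD t ∅ →
      ∃ r, s < r ∧ r ≤ t ∧ (q - 1) * h + 1 ≤ ((φ.getD r ∅) ∩ sub q i v).card := by
  intro h
  induction h with
  | zero =>
    intro v hv s t hst htl hempty hvt
    refine ⟨t, hst, le_rfl, ?_⟩
    have : v ∈ (φ.getD t ∅) ∩ sub q i v := Finset.mem_inter.2 ⟨hvt, self_mem_sub v⟩
    simpa using Finset.card_pos.2 ⟨v, this⟩
  | succ h ih =>
    intro v hv s t hst htl hempty hvt
    have hq1 : 1 ≤ q := by omega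
    have hd : (v.1 : ℕ) < i := by
      have := v.1.isLt; omega
    -- v is not pebbled at time s
    have hvs : v ∉ φ.getD s ∅ := by
      intro hvs
      have : v ∈ (φ.getD s ∅) ∩ sub q i v := Finset.mem_inter.2 ⟨hvs, self_mem_sub v⟩
      rw [hempty] at this; simp at this
    -- first time t0 in (s, t] when v is pebbled
    have hQ : ∃ k, s < k ∧ k ≤ t ∧ v ∈ φ.getD k ∅ := ⟨t, hst, le_rfl, hvt⟩
    set t0 := Nat.find hQ with ht0def
    obtain ⟨ht0s, ht0t, hvt0⟩ := Nat.find_spec hQ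
    have hvprev : v ∉ φ.getD (t0 - 1) ∅ := by
      rcases Nat.lt_or_ge s (t0 - 1) with hc | hc
      · have := Nat.find_min hQ (show t0 - 1 < t0 by omega)
        intro hmem
        exact this ⟨hc, by omega, hmem⟩
      · have : t0 - 1 = s := by omega
        rw [this]; exact hvs
    -- the step from t0 - 1 to t0 places v; its predecessors are pebbled at t0 - 1
    have hstep : PebbleStep (TreeE q i) (φ.getD (t0 - 1) ∅) (φ.getD t0 ∅) := by
      have h1 : t0 - 1 < φ.length - 1 := by omega
      have := List.isChain_iff_getElem.1 hch (t0 - 1) (by omega)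
      have e1 : φ.getD (t0 - 1) ∅ = φ.get ⟨t0 - 1, by omega⟩ := by
        rw [List.getD_eq_getElem _ _ (by omega)]; rfl
      have e2 : φ.getD t0 ∅ = φ.get ⟨t0 - 1 + 1, by omega⟩ := by
        rw [List.getD_eq_getElem _ _ (by omega : t0 < φ.length)]
        simp only [List.get_eq_getElem]
        congr 1
        omega
      rw [e1, e2]
      exact this
    have hpred : ∀ u, TreeE q i u v → u ∈ φ.getD (t0 - 1) ∅ :=
      step_insert hstep hvprev hvt0
    have hchild : ∀ j : Fin q, child hq1 v hd j ∈ φ.getD (t0 - 1) ∅ :=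
      fun j => hpred _ (child_edge hq1 v hd j)
    -- last empty time of each child subtree
    set P : Fin q → ℕ → Prop :=
      fun j u => s ≤ u ∧ (φ.getD u ∅) ∩ sub q i (child hq1 v hd j) = ∅ with hP
    have hPs : ∀ j, P j s := by
      intro j
      refine ⟨le_rfl, ?_⟩
      have hsub : (φ.getD s ∅) ∩ sub q i (child hq1 v hd j) ⊆
          (φ.getD s ∅) ∩ sub q i v :=
        Finset.inter_subset_inter le_rfl (sub_child_subset hq1 v hd j)
      rw [hempty] at hsub
      exact Finset.subset_empty.1 hsub
    set e : Fin q → ℕ := fun j => Nat.findGreatest (P j) (t0 - 1) with he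
    have hse : ∀ j, s ≤ e j := fun j => Nat.le_findGreatest (by omega) (hPs j)
    have hespec : ∀ j, P j (e j) := fun j => Nat.findGreatest_spec (by omega) (hPs j)
    have helt : ∀ j, e j < t0 - 1 := by
      intro j
      rcases Nat.lt_or_ge (e j) (t0 - 1) with hc | hc
      · exact hc
      · exfalso
        have hee : e j = t0 - 1 := le_antisymm (Nat.findGreatest_le _) hc
        have := (hespec j).2
        rw [hee] at this
        have hmem : child hq1 v hd j ∈
            (φ.getD (t0 - 1) ∅) ∩ sub q i (child hq1 v hd j) :=
          Finset.mem_inter.2 ⟨hchild j, self_mem_sub _⟩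
        rw [this] at hmem; simp at hmem
    -- the child whose subtree was last empty latest
    obtain ⟨j₀, -, hj₀⟩ := Finset.exists_max_image Finset.univ e
      ⟨⟨0, by omega⟩, Finset.mem_univ _⟩
    -- apply IH inside the subtree of j₀
    have hih := ih (child hq1 v hd j₀) (by simp [child]; omega) (e j₀) (t0 - 1)
      (helt j₀) (by omega) (hespec j₀).2 (hchild j₀)
    obtain ⟨r, hr1, hr2, hr3⟩ := hih
    -- at time r every other child subtree is nonempty
    have hother : ∀ j : Fin q,
        1 ≤ ((φ.getD r ∅) ∩ sub q i (child hq1 v hd j)).card := by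
      intro j
      rcases eq_or_ne j j₀ with rfl | hne
      · calc 1 ≤ (q - 1) * h + 1 := by omega
          _ ≤ _ := hr3
      · have hejr : e j < r := lt_of_le_of_lt (hj₀ j (Finset.mem_univ _)) hr1
        have := Nat.findGreatest_is_greatest (P := P j) hejr hr2
        rw [hP] at this
        simp only [not_and] at this
        have hne' : (φ.getD r ∅) ∩ sub q i (child hq1 v hd j) ≠ ∅ :=
          this (le_trans (hse j₀) (le_of_lt hr1))
        exact Finset.card_pos.2 (Finset.nonempty_iff_ne_empty.2 hne')
    -- sum over children
    have hdisj : ∀ x ∈ (Finset.univ : Finset (Fin q)), ∀ y ∈ (Finset.univ : Finset (Fin q)),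
        x ≠ y → Disjoint ((φ.getD r ∅) ∩ sub q i (child hq1 v hd x))
          ((φ.getD r ∅) ∩ sub q i (child hq1 v hd y)) := by
      intro x _ y _ hxy
      rw [Finset.disjoint_left]
      intro u hu hu'
      exact hxy (sub_child_index hq1 v hd (Finset.mem_inter.1 hu).2
        (Finset.mem_inter.1 hu').2)
    have hsum : ∑ j : Fin q, ((φ.getD r ∅) ∩ sub q i (child hq1 v hd j)).card
        ≤ ((φ.getD r ∅) ∩ sub q i v).card := by
      rw [← Finset.card_biUnion hdisj]
      refine Finset.card_le_card ?_
      intro u hu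
      rw [Finset.mem_biUnion] at hu
      obtain ⟨j, -, hj⟩ := hu
      exact Finset.mem_inter.2 ⟨(Finset.mem_inter.1 hj).1,
        sub_child_subset hq1 v hd j (Finset.mem_inter.1 hj).2⟩
    have hlow : (q - 1) * h + 1 + (q - 1) ≤
        ∑ j : Fin q, ((φ.getD r ∅) ∩ sub q i (child hq1 v hd j)).card := by
      rw [← Finset.add_sum_erase _ _ (Finset.mem_univ j₀)]
      have h1 : (q - 1) ≤ ∑ j ∈ Finset.univ.erase j₀,
          ((φ.getD r ∅) ∩ sub q i (child hq1 v hd j)).card := by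
        have := Finset.card_nsmul_le_sum (Finset.univ.erase j₀)
          (fun j => ((φ.getD r ∅) ∩ sub q i (child hq1 v hd j)).card) 1
          (fun x _ => hother x)
        simp only [smul_eq_mul, mul_one] at this
        rwa [Finset.card_erase_of_mem (Finset.mem_univ _), Finset.card_univ,
          Fintype.card_fin] at this
      omega
    refine ⟨r, lt_of_le_of_lt (hse j₀) hr1, by omega, ?_⟩
    have : (q - 1) * (h + 1) + 1 = (q - 1) * h + 1 + (q - 1) := by ring
    rw [this]
    exact le_trans hlow hsum

theorem stmt_6 (q i : ℕ) (hq : 2 ≤ q) :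
    (q - 1) * i ≤ pebblingNumber (TreeE q i) := by
  obtain ⟨φ₀, hφ₀⟩ := exists_pebbling q i
  have hne : {m | ∃ φ : List (Finset (TreeV q i)), IsPebbling (TreeE q i) φ ∧
      maxPebbles φ ≤ m}.Nonempty := ⟨maxPebbles φ₀, φ₀, hφ₀, le_rfl⟩
  refine le_csInf hne ?_
  rintro m ⟨φ, ⟨hhead, hchain, hcover⟩, hmax⟩
  rcases Nat.eq_zero_or_pos i with rfl | hi
  · simp
  -- the root
  set root : TreeV q i := ⟨⟨0, by omega⟩, ⟨0, pow_pos (by omega : 0 < q) _⟩⟩ with hroot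
  obtain ⟨sconf, hsconf, hrootmem⟩ := hcover root
  obtain ⟨⟨t, htl⟩, rfl⟩ := List.mem_iff_get.1 hsconf
  have hgetD : φ.getD t ∅ = φ.get ⟨t, htl⟩ := by
    rw [List.getD_eq_getElem _ _ htl]; rfl
  -- φ starts with ∅
  have hφ0 : φ.getD 0 ∅ = ∅ := by
    cases φ with
    | nil => simp at hhead
    | cons a φ' =>
      simp only [List.head?_cons, Option.some_inj] at hhead
      simpa using hhead
  have ht0 : 0 < t := by
    rcases Nat.eq_zero_or_pos t with rfl | h
    · rw [← hgetD, hφ0] at hrootmem; simp at hrootmem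
    · exact h
  have hkey := key q i hq φ hchain i root (by simp [hroot]) 0 t ht0 htl
    (by rw [hφ0]; simp) (by rw [hgetD]; exact hrootmem)
  obtain ⟨r, -, hrt, hcard⟩ := hkey
  have hrl : r < φ.length := lt_of_le_of_lt hrt htl
  calc (q - 1) * i ≤ ((φ.getD r ∅) ∩ sub q i root).card := by omega
    _ ≤ (φ.getD r ∅).card := Finset.card_le_card (Finset.inter_subset_left)
    _ ≤ maxPebbles φ := getD_le_maxPebbles φ hrl
    _ ≤ m := hmax
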